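/- Contraction estimate underlying local existence (Theorem 3): let f be Lipschitz in x with constant K_f, let û ∈ BV on I_h⁺ = (t₀, t₀+h) with continuous part u_c, and let ĝ be Lipschitz in x with constant K_g and bounded. Then for the operator P(x̂)(t) = x₀ + ∫_{t₀}^t f(r, x̂(r)) dr + ∫_{t₀}^t ĝ(r, x̂(r)) du_c(r) acting on curves x̂ : I_h⁺ → ℝⁿ, one has the Lipschitz estimate sup|P(x̂) − P(ŷ)| ≤ (K_f h + K_g var_{I_h⁺}(u_c)) · sup|x̂ − ŷ|; hence if K_f h + K_g var_{I_h⁺}(u_c) < 1, P has a unique fixed point among continuous curves (by the Banach fixed point theorem). -/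

import Mathlib

open MeasureTheory Set

/-- Contraction estimate underlying local existence (Theorem 3 of the paper):
for `P(x̂)(t) = x₀ + ∫_{t₀}^t f(r, x̂(r)) dr + ∫_{(t₀,t]} g(r, x̂(r)) du_c(r)`,
where the Lebesgue–Stieltjes integral against the continuous BV function `u_c` is
represented as the difference of integrals against two finite measures `μ, ν`
(with total variation `V = μ((t₀,t₀+h]) + ν((t₀,t₀+h])`), one has
`sup |P x̂ - P ŷ| ≤ (K_f h + K_g V) sup |x̂ - ŷ|` on `[t₀, t₀+h]`; hence if
`K_f h + K_g V < 1` then `P` has a unique fixed point among continuous curves. -/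
theorem stmt16 {n : ℕ} (t₀ h : ℝ) (hh : 0 < h)
    (f g : ℝ → (Fin n → ℝ) → (Fin n → ℝ))
    (Kf Kg : NNReal)
    (hf : ∀ t, LipschitzWith Kf (f t))
    (hg : ∀ t, LipschitzWith Kg (g t))
    (μ ν : Measure ℝ) [IsFiniteMeasure μ] [IsFiniteMeasure ν]
    (V : ℝ)
    (hV : (μ (Set.Ioc t₀ (t₀ + h))).toReal + (ν (Set.Ioc t₀ (t₀ + h))).toReal = V)
    (x₀ : Fin n → ℝ)
    (P : (ℝ → (Fin n → ℝ)) → ℝ → (Fin n → ℝ))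
    (hP : ∀ y t, P y t = x₀ + (∫ r in t₀..t, f r (y r)) +
      ((∫ r in Set.Ioc t₀ t, g r (y r) ∂μ) - ∫ r in Set.Ioc t₀ t, g r (y r) ∂ν))
    (hint : ∀ y : ℝ → Fin n → ℝ, Continuous y →
      (∀ t ∈ Set.Icc t₀ (t₀ + h), IntervalIntegrable (fun r => f r (y r)) volume t₀ t) ∧
      IntegrableOn (fun r => g r (y r)) (Set.Ioc t₀ (t₀ + h)) μ ∧
      IntegrableOn (fun r => g r (y r)) (Set.Ioc t₀ (t₀ + h)) ν) :
    (∀ x y : ℝ → Fin n → ℝ, Continuous x → Continuous y →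
      ∀ C : ℝ, (∀ r ∈ Set.Icc t₀ (t₀ + h), ‖x r - y r‖ ≤ C) →
      ∀ t ∈ Set.Icc t₀ (t₀ + h),
        ‖P x t - P y t‖ ≤ ((Kf : ℝ) * h + (Kg : ℝ) * V) * C) ∧
    ((Kf : ℝ) * h + (Kg : ℝ) * V < 1 →
      (∀ y : ℝ → Fin n → ℝ, Continuous y → Continuous (P y)) →
      ∃ x : ℝ → Fin n → ℝ, Continuous x ∧ (∀ t ∈ Set.Icc t₀ (t₀ + h), P x t = x t) ∧
        ∀ y : ℝ → Fin n → ℝ, Continuous y →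
          (∀ t ∈ Set.Icc t₀ (t₀ + h), P y t = y t) →
          ∀ t ∈ Set.Icc t₀ (t₀ + h), y t = x t) := by
  have hle : t₀ ≤ t₀ + h := by linarith
  -- Part 1
  have part1 : ∀ x y : ℝ → Fin n → ℝ, Continuous x → Continuous y →
      ∀ C : ℝ, (∀ r ∈ Set.Icc t₀ (t₀ + h), ‖x r - y r‖ ≤ C) →
      ∀ t ∈ Set.Icc t₀ (t₀ + h),
        ‖P x t - P y t‖ ≤ ((Kf : ℝ) * h + (Kg : ℝ) * V) * C := by
    intro x y hx hy C hC t ht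
    obtain ⟨ht1, ht2⟩ := ht
    have hC0 : 0 ≤ C := le_trans (norm_nonneg _) (hC t₀ ⟨le_refl _, hle⟩)
    obtain ⟨hfx, hgxμ, hgxν⟩ := hint x hx
    obtain ⟨hfy, hgyμ, hgyν⟩ := hint y hy
    have hsub : Set.Ioc t₀ t ⊆ Set.Ioc t₀ (t₀ + h) := Set.Ioc_subset_Ioc le_rfl ht2
    have key : P x t - P y t =
        (∫ r in t₀..t, (f r (x r) - f r (y r))) +
        ((∫ r in Set.Ioc t₀ t, (g r (x r) - g r (y r)) ∂μ) -
         (∫ r in Set.Ioc t₀ t, (g r (x r) - g r (y r)) ∂ν)) := by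
      rw [hP, hP,
        intervalIntegral.integral_sub (hfx t ⟨ht1, ht2⟩) (hfy t ⟨ht1, ht2⟩),
        integral_sub (hgxμ.mono_set hsub) (hgyμ.mono_set hsub),
        integral_sub (hgxν.mono_set hsub) (hgyν.mono_set hsub)]
      abel
    have bnd1 : ‖∫ r in t₀..t, (f r (x r) - f r (y r))‖ ≤ (Kf : ℝ) * C * h := by
      have hb := intervalIntegral.norm_integral_le_of_norm_le_const
        (a := t₀) (b := t) (C := (Kf : ℝ) * C)
        (f := fun r => f r (x r) - f r (y r)) ?_
      · refine hb.trans ?_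
        have habs : |t - t₀| ≤ h := by rw [abs_of_nonneg (by linarith)]; linarith
        exact mul_le_mul_of_nonneg_left habs (mul_nonneg Kf.coe_nonneg hC0)
      · intro r hr
        have hr' : r ∈ Set.Icc t₀ (t₀ + h) := by
          have h' := Set.uIoc_subset_uIcc hr
          rw [Set.uIcc_of_le ht1] at h'
          exact ⟨h'.1, h'.2.trans ht2⟩
        calc ‖f r (x r) - f r (y r)‖ = dist (f r (x r)) (f r (y r)) := (dist_eq_norm _ _).symm
          _ ≤ (Kf : ℝ) * dist (x r) (y r) := (hf r).dist_le_mul _ _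
          _ ≤ (Kf : ℝ) * C := by
              refine mul_le_mul_of_nonneg_left ?_ Kf.coe_nonneg
              rw [dist_eq_norm]; exact hC r hr'
    have bndg : ∀ (κ : Measure ℝ) [IsFiniteMeasure κ],
        ‖∫ r in Set.Ioc t₀ t, (g r (x r) - g r (y r)) ∂κ‖ ≤
          (Kg : ℝ) * C * (κ (Set.Ioc t₀ (t₀ + h))).toReal := by
      intro κ _
      have h1 : ‖∫ r in Set.Ioc t₀ t, (g r (x r) - g r (y r)) ∂κ‖ ≤
          (Kg : ℝ) * C * (κ (Set.Ioc t₀ t)).toReal := by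
        refine norm_setIntegral_le_of_norm_le_const (measure_lt_top _ _)
          ?_
        intro r hr
        have hr' : r ∈ Set.Icc t₀ (t₀ + h) := ⟨hr.1.le, hr.2.trans ht2⟩
        calc ‖g r (x r) - g r (y r)‖ = dist (g r (x r)) (g r (y r)) := (dist_eq_norm _ _).symm
          _ ≤ (Kg : ℝ) * dist (x r) (y r) := (hg r).dist_le_mul _ _
          _ ≤ (Kg : ℝ) * C := by
              refine mul_le_mul_of_nonneg_left ?_ Kg.coe_nonneg
              rw [dist_eq_norm]; exact hC r hr'
      refine h1.trans ?_
      refine mul_le_mul_of_nonneg_left ?_ (mul_nonneg Kg.coe_nonneg hC0)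
      exact ENNReal.toReal_mono (measure_ne_top _ _) (measure_mono hsub)
    calc ‖P x t - P y t‖
        ≤ ‖∫ r in t₀..t, (f r (x r) - f r (y r))‖ +
          (‖∫ r in Set.Ioc t₀ t, (g r (x r) - g r (y r)) ∂μ‖ +
           ‖∫ r in Set.Ioc t₀ t, (g r (x r) - g r (y r)) ∂ν‖) := by
          rw [key]
          exact (norm_add_le _ _).trans (by gcongr; exact norm_sub_le _ _)
      _ ≤ (Kf : ℝ) * C * h + ((Kg : ℝ) * C * (μ (Set.Ioc t₀ (t₀ + h))).toReal +
          (Kg : ℝ) * C * (ν (Set.Ioc t₀ (t₀ + h))).toReal) :=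
          add_le_add bnd1 (add_le_add (bndg μ) (bndg ν))
      _ = ((Kf : ℝ) * h + (Kg : ℝ) * V) * C := by rw [← hV]; ring
  refine ⟨part1, ?_⟩
  intro hlt hcont
  have hV0 : 0 ≤ V := by rw [← hV]; positivity
  have hIccExt : ∀ u : C(Set.Icc t₀ (t₀ + h), Fin n → ℝ),
      Continuous (Set.IccExtend hle u) :=
    fun u => u.continuous.comp continuous_projIcc
  let Q : C(Set.Icc t₀ (t₀ + h), Fin n → ℝ) → C(Set.Icc t₀ (t₀ + h), Fin n → ℝ) :=
    fun u => ⟨fun p => P (Set.IccExtend hle u) p,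
      by exact Continuous.comp (hcont _ (hIccExt u)) continuous_subtype_val⟩
  have hk0 : 0 ≤ (Kf : ℝ) * h + (Kg : ℝ) * V := by positivity
  set k : NNReal := ⟨(Kf : ℝ) * h + (Kg : ℝ) * V, hk0⟩ with hk
  have hkc : (k : ℝ) = (Kf : ℝ) * h + (Kg : ℝ) * V := rfl
  have hQlip : LipschitzWith k Q := by
    apply LipschitzWith.of_dist_le_mul
    intro u v
    rw [ContinuousMap.dist_le (by positivity)]
    intro p
    show dist (P (Set.IccExtend hle u) p) (P (Set.IccExtend hle v) p) ≤ (k : ℝ) * dist u v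
    rw [dist_eq_norm, hkc]
    refine part1 (Set.IccExtend hle u) (Set.IccExtend hle v) (hIccExt u) (hIccExt v)
      (dist u v) ?_ p p.2
    intro r hr
    rw [Set.IccExtend_of_mem hle u hr, Set.IccExtend_of_mem hle v hr, ← dist_eq_norm]
    exact ContinuousMap.dist_apply_le_dist _
  have hQ : ContractingWith k Q := ⟨by exact_mod_cast hlt, hQlip⟩
  have hne : Nonempty (Set.Icc t₀ (t₀ + h)) := ⟨⟨t₀, le_refl _, hle⟩⟩
  let u := hQ.fixedPoint Q
  have hu : Q u = u := hQ.fixedPoint_isFixedPt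
  -- P agrees on curves agreeing on I
  have hPcong : ∀ (a b : ℝ → Fin n → ℝ), (∀ r ∈ Set.Icc t₀ (t₀ + h), a r = b r) →
      ∀ t ∈ Set.Icc t₀ (t₀ + h), P a t = P b t := by
    intro a b hab t ht
    rw [hP, hP]
    have h1 : (∫ r in t₀..t, f r (a r)) = ∫ r in t₀..t, f r (b r) := by
      apply intervalIntegral.integral_congr
      intro r hr
      rw [Set.uIcc_of_le ht.1] at hr
      exact congrArg _ (hab r ⟨hr.1, hr.2.trans ht.2⟩)
    have h2 : ∀ (κ : Measure ℝ), (∫ r in Set.Ioc t₀ t, g r (a r) ∂κ) =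
        ∫ r in Set.Ioc t₀ t, g r (b r) ∂κ := by
      intro κ
      apply setIntegral_congr_fun measurableSet_Ioc
      intro r hr
      exact congrArg _ (hab r ⟨hr.1.le, hr.2.trans ht.2⟩)
    rw [h1, h2 μ, h2 ν]
  refine ⟨Set.IccExtend hle u, hIccExt u, ?_, ?_⟩
  · intro t ht
    have h1 : Q u ⟨t, ht⟩ = u ⟨t, ht⟩ := by rw [hu]
    calc P (Set.IccExtend hle u) t = Q u ⟨t, ht⟩ := rfl
      _ = u ⟨t, ht⟩ := h1
      _ = Set.IccExtend hle u t := (Set.IccExtend_of_mem hle u ht).symm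
  · intro y hy hyfix t ht
    let v : C(Set.Icc t₀ (t₀ + h), Fin n → ℝ) :=
      ⟨fun p => y p, hy.comp continuous_subtype_val⟩
    have hv : Function.IsFixedPt Q v := by
      apply ContinuousMap.ext
      intro p
      have heq : ∀ r ∈ Set.Icc t₀ (t₀ + h), Set.IccExtend hle v r = y r := by
        intro r hr
        rw [Set.IccExtend_of_mem hle v hr]
        rfl
      calc Q v p = P (Set.IccExtend hle v) p := rfl
        _ = P y p := hPcong _ _ heq p p.2
        _ = y p := hyfix p p.2
        _ = v p := rfl
    have hvu : v = u := hQ.fixedPoint_unique hv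
    calc y t = v ⟨t, ht⟩ := rfl
      _ = u ⟨t, ht⟩ := by rw [hvu]
      _ = Set.IccExtend hle u t := (Set.IccExtend_of_mem hle u ht).symm
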